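/- For v ∈ (0,1], define e(v) := (v − 1.1 + √((1.1 − v)² + 0.4v)) / (2v), and set e(0) := 1/11. Then: (i) for every v ∈ [0,1], 0 < e(v) < 1 and (0.1 + v·e(v))(1 − e(v)) = e(v), so e(v) is the unique equilibrium in (0,1) of the scalar feedback system ẋ = (0.1 + vx)(1 − x) − x; and (ii) e is strictly convex on (0,1) (its second derivative is positive there), so the steady-state output y_ss(v) = e(v) is not a concave function of the feedback weight v. -/

import Mathlib

/-- The steady state of the scalar feedback system `ẋ = (0.1 + v x)(1 - x) - x`:
`e(v) = (v - 1.1 + √((1.1 - v)² + 0.4 v)) / (2v)` for `v ≠ 0`, and `e(0) = 1/11`. -/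
noncomputable def eFun : ℝ → ℝ := fun v =>
  if v = 0 then 1 / 11
  else (v - 1.1 + Real.sqrt ((1.1 - v) ^ 2 + 0.4 * v)) / (2 * v)

noncomputable def Sf (v : ℝ) : ℝ := Real.sqrt (v^2 - 1.8*v + 1.21)
noncomputable def Gf (v : ℝ) : ℝ := 1.1 - v + Sf v
noncomputable def Ff (v : ℝ) : ℝ := 0.2 / Gf v
noncomputable def Sd (v : ℝ) : ℝ := (2*v - 1.8) / (2 * Sf v)
noncomputable def Gd (v : ℝ) : ℝ := -1 + Sd v
noncomputable def F1 (v : ℝ) : ℝ := (0 * Gf v - 0.2 * Gd v) / (Gf v)^2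
noncomputable def F2 (v : ℝ) : ℝ :=
  (0.4 * Sf v * (Sf v - (v - 0.9))^2 - 0.08 * (1.1 - v + Sf v)) /
    (Sf v ^ 3 * (1.1 - v + Sf v)^3)

lemma Sf_sq (v : ℝ) : Sf v ^ 2 = v^2 - 1.8*v + 1.21 := by
  have h : (0:ℝ) ≤ v^2 - 1.8*v + 1.21 := by nlinarith [sq_nonneg (v - 0.9)]
  simpa [Sf] using Real.sq_sqrt h

lemma Sf_pos (v : ℝ) : 0 < Sf v := by
  have h : (0:ℝ) < v^2 - 1.8*v + 1.21 := by nlinarith [sq_nonneg (v - 0.9)]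
  exact Real.sqrt_pos.mpr h

lemma Gf_pos (v : ℝ) : 0 < Gf v := by
  have h1 := Sf_sq v
  have h2 := Sf_pos v
  unfold Gf
  nlinarith [sq_nonneg (Sf v - v + 0.9), sq_nonneg (Sf v + v - 0.9)]

lemma eFun_eq_Ff (v : ℝ) (hv : 0 ≤ v) : eFun v = Ff v := by
  have hsq : (1.1 - v) ^ 2 + 0.4 * v = v^2 - 1.8*v + 1.21 := by ring
  rcases eq_or_lt_of_le hv with h0 | h0
  · subst h0
    simp only [eFun, if_pos rfl, Ff]
    have hS0 : Sf 0 = 1.1 := by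
      have h : ((0:ℝ)^2 - 1.8*0 + 1.21) = 1.1^2 := by norm_num
      rw [Sf, h, Real.sqrt_sq (by norm_num)]
    rw [Gf, hS0]; norm_num
  · rw [eFun, if_neg (ne_of_gt h0), hsq, Ff]
    have hG := Gf_pos v
    have hsq2 := Sf_sq v
    rw [show Real.sqrt (v^2 - 1.8*v + 1.21) = Sf v from rfl,
      div_eq_div_iff (by positivity) (ne_of_gt hG)]
    unfold Gf at *
    nlinarith [hsq2]

lemma hasDerivAt_Sf (v : ℝ) : HasDerivAt Sf (Sd v) v := by
  have hp : HasDerivAt (fun v : ℝ => v^2 - 1.8*v + 1.21) (2*v - 1.8) v := by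
    have := ((hasDerivAt_pow 2 v).sub ((hasDerivAt_id v).const_mul 1.8)).add_const 1.21
    exact this.congr_deriv (by norm_num)
  have hne : v^2 - 1.8*v + 1.21 ≠ 0 := by nlinarith [sq_nonneg (v - 0.9)]
  have := hp.sqrt hne
  exact this

lemma hasDerivAt_Gf (v : ℝ) : HasDerivAt Gf (Gd v) v := by
  have h := ((hasDerivAt_const v (1.1:ℝ)).sub (hasDerivAt_id v)).add (hasDerivAt_Sf v)
  have h2 : HasDerivAt (fun x => 1.1 - x + Sf x) (0 - 1 + Sd v) v := h
  exact h2.congr_deriv (by simp [Gd])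

lemma hasDerivAt_Ff (v : ℝ) : HasDerivAt Ff (F1 v) v := by
  have := (hasDerivAt_const v (0.2:ℝ)).div (hasDerivAt_Gf v) (ne_of_gt (Gf_pos v))
  exact this

lemma hasDerivAt_F1 (v : ℝ) : HasDerivAt F1 (F2 v) v := by
  have hS := hasDerivAt_Sf v
  have hG := hasDerivAt_Gf v
  have hsp := Sf_pos v
  have hGp := Gf_pos v
  have hSne : (2 : ℝ) * Sf v ≠ 0 := by positivity
  have hnum : HasDerivAt (fun v : ℝ => 2*v - 1.8) (2:ℝ) v := by
    simpa using ((hasDerivAt_id v).const_mul 2).sub_const 1.8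
  have hden : HasDerivAt (fun v => 2 * Sf v) (2 * Sd v) v := hS.const_mul 2
  have hQ : HasDerivAt (fun v => (2*v - 1.8) / (2 * Sf v))
      ((2 * (2 * Sf v) - (2*v - 1.8) * (2 * Sd v)) / (2 * Sf v)^2) v := hnum.div hden hSne
  have hN : HasDerivAt (fun v : ℝ => 0 - 0.2 * (-1 + (2*v - 1.8) / (2 * Sf v)))
      (0 - 0.2 * (0 + (2 * (2 * Sf v) - (2*v - 1.8) * (2 * Sd v)) / (2 * Sf v)^2)) v :=
    (hasDerivAt_const v (0:ℝ)).sub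
      (((hasDerivAt_const v (-1:ℝ)).add hQ).const_mul 0.2)
  have hD : HasDerivAt (fun v => (Gf v)^2) ((2:ℕ) * Gf v ^ 1 * Gd v) v := hG.pow 2
  have hDne : (Gf v)^2 ≠ 0 := by positivity
  have hder := hN.div hD hDne
  have heq : F1 = fun v => (0 - 0.2 * (-1 + (2*v - 1.8) / (2 * Sf v))) / (Gf v)^2 := by
    funext x; simp [F1, Gd, Sd]
  rw [heq]
  refine hder.congr_deriv ?_
  symm
  have h1 : 2 * (2 * Sf v) - (2*v - 1.8) * (2 * Sd v) = 1.6 / Sf v := by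
    rw [Sd]
    field_simp
    linear_combination 4 * Sf_sq v
  have h2 : Gd v = ((v - 0.9) - Sf v) / Sf v := by
    rw [Gd, Sd]; field_simp; ring
  rw [h1, h2]
  rw [F2, show Gf v = 1.1 - v + Sf v from rfl]
  have hGne : (1.1 : ℝ) - v + Sf v ≠ 0 := ne_of_gt hGp
  field_simp
  linear_combination ((Sf v * 8 - 4) * ((1.1 - v + Sf v)^3 * Sf v)
    + Sf v * (1331/250 - 363/25*v + 66/5*v^2 - 4*v^3)
    + Sf v^2 * (484/125 + 66/25*v - 72/5*v^2 + 8*v^3)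
    + Sf v^3 * (-396/25 + 204/5*v - 24*v^2)
    + Sf v^4 * (-112/5 + 24*v)
    - 8 * Sf v^5) * Sf_sq v

lemma F2_pos (v : ℝ) (hv : 0 < v) (hv1 : v < 1) : 0 < F2 v := by
  have hs2 := Sf_sq v
  have hsp := Sf_pos v
  have hGp := Gf_pos v
  rw [show Gf v = 1.1 - v + Sf v from rfl] at hGp
  set s := Sf v with hs
  have hslb : 0.63 < s := by nlinarith [sq_nonneg (v - 0.9)]
  have hsw : v - 0.9 < s := by nlinarith [sq_nonneg (v - 0.9)]
  have h3 : s ^ 3 = (v^2 - 1.8*v + 1.21) * s := by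
    rw [pow_succ, hs2]
  rw [F2]
  apply div_pos
  · nlinarith [mul_nonneg (sub_nonneg.mpr hsw.le) (sq_nonneg (v - 0.9)), hslb, hsw, h3]
  · positivity

lemma deriv2_eFun (v : ℝ) (hv : 0 < v) (hv1 : v < 1) :
    deriv (deriv eFun) v = F2 v := by
  have hmem : Set.Ioi (0:ℝ) ∈ nhds v := Ioi_mem_nhds hv
  have heq : eFun =ᶠ[nhds v] Ff :=
    Filter.eventuallyEq_of_mem hmem (fun x hx => eFun_eq_Ff x (le_of_lt hx))
  have hd1 : deriv eFun =ᶠ[nhds v] deriv Ff := heq.deriv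
  have hFf : deriv Ff = F1 := funext fun x => (hasDerivAt_Ff x).deriv
  rw [hd1.deriv_eq, hFf, (hasDerivAt_F1 v).deriv]

/-- (i) For every `v ∈ [0,1]`, `e(v) ∈ (0,1)`, it satisfies the
equilibrium equation `(0.1 + v e)(1 - e) = e`, and it is the unique equilibrium in
`(0,1)` of the scalar feedback system `ẋ = (0.1 + v x)(1 - x) - x`.
(ii) `e` has positive second derivative on `(0,1)`, is strictly convex there, and
hence the steady-state output `y_ss(v) = e(v)` is not a concave function of the
feedback weight `v` on `[0,1]`. -/
theorem scalar_feedback_steady_state_not_concave :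
    (∀ v ∈ Set.Icc (0 : ℝ) 1,
      eFun v ∈ Set.Ioo (0 : ℝ) 1 ∧
      (0.1 + v * eFun v) * (1 - eFun v) = eFun v ∧
      ∀ x ∈ Set.Ioo (0 : ℝ) 1, (0.1 + v * x) * (1 - x) = x → x = eFun v) ∧
    (∀ v ∈ Set.Ioo (0 : ℝ) 1, 0 < deriv (deriv eFun) v) ∧
    StrictConvexOn ℝ (Set.Ioo (0 : ℝ) 1) eFun ∧
    ¬ ConcaveOn ℝ (Set.Icc (0 : ℝ) 1) eFun := by
  have hpart1 : ∀ v ∈ Set.Icc (0 : ℝ) 1,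
      eFun v ∈ Set.Ioo (0 : ℝ) 1 ∧
      (0.1 + v * eFun v) * (1 - eFun v) = eFun v ∧
      ∀ x ∈ Set.Ioo (0 : ℝ) 1, (0.1 + v * x) * (1 - x) = x → x = eFun v := by
    rintro v ⟨hv0, hv1⟩
    have hE := eFun_eq_Ff v hv0
    have hs2 := Sf_sq v
    have hsp := Sf_pos v
    have hGp := Gf_pos v
    have hGd : Gf v = 1.1 - v + Sf v := rfl
    have hsw : v - 0.9 < Sf v := by nlinarith [sq_nonneg (v - 0.9)]
    have hFval : Ff v = 0.2 / (1.1 - v + Sf v) := rfl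
    have hmem : eFun v ∈ Set.Ioo (0:ℝ) 1 := by
      rw [hE, hFval]
      constructor
      · apply div_pos (by norm_num); rw [← hGd]; exact hGp
      · rw [div_lt_one (by rw [← hGd]; exact hGp)]
        linarith
    have hequi : (0.1 + v * eFun v) * (1 - eFun v) = eFun v := by
      rw [hE, hFval]
      have hGne : (1.1:ℝ) - v + Sf v ≠ 0 := by rw [← hGd]; exact ne_of_gt hGp
      field_simp
      nlinarith [hs2]
    refine ⟨hmem, hequi, fun x hx hxeq => ?_⟩
    -- uniqueness
    have hfac : (x - eFun v) * (v * (x + eFun v) + 1.1 - v) = 0 := by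
      nlinarith [hequi, hxeq]
    have hpos : 0 < v * (x + eFun v) + 1.1 - v := by
      have h1 : 0 ≤ v * (x + eFun v) := by
        apply mul_nonneg hv0
        have := hmem.1; have := hx.1; linarith
      have h2 : v * (x + eFun v) + 1.1 - v ≥ 0 + 1.1 - 1 := by
        have := hmem.1
        have hxx : v * (x + eFun v) ≥ 0 := h1
        linarith
      linarith
    have := mul_eq_zero.mp hfac
    rcases this with h | h
    · linarith [sub_eq_zero.mp h]
    · exact absurd h (ne_of_gt hpos)
  have hpart2 : ∀ v ∈ Set.Ioo (0 : ℝ) 1, 0 < deriv (deriv eFun) v := by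
    rintro v ⟨hv0, hv1⟩
    rw [deriv2_eFun v hv0 hv1]
    exact F2_pos v hv0 hv1
  have hScont : Continuous Sf := by
    unfold Sf
    exact Real.continuous_sqrt.comp
      (((continuous_pow 2).sub (continuous_const.mul continuous_id)).add continuous_const)
  have hGcont : Continuous Gf := by
    unfold Gf
    exact (continuous_const.sub continuous_id).add hScont
  have hFcont : Continuous Ff := by
    unfold Ff
    exact continuous_const.div hGcont fun x => (Gf_pos x).ne'
  have hconv : StrictConvexOn ℝ (Set.Ioo (0 : ℝ) 1) eFun := by
    apply strictConvexOn_of_deriv2_pos (convex_Ioo 0 1)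
    · exact hFcont.continuousOn.congr (fun x hx => eFun_eq_Ff x hx.1.le)
    · intro x hx
      rw [interior_Ioo] at hx
      have : deriv^[2] eFun x = deriv (deriv eFun) x := by
        simp [Function.iterate_succ, Function.iterate_zero]
      rw [this]
      exact hpart2 x hx
  refine ⟨hpart1, hpart2, hconv, ?_⟩
  intro hconc
  have h0 : (0:ℝ) ∈ Set.Icc (0:ℝ) 1 := by norm_num
  have h1 : (1:ℝ) ∈ Set.Icc (0:ℝ) 1 := by norm_num
  have := hconc.2 h0 h1 (by norm_num : (0:ℝ) ≤ 1/2) (by norm_num : (0:ℝ) ≤ 1/2)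
    (by norm_num : (1:ℝ)/2 + 1/2 = 1)
  simp only [smul_eq_mul, mul_zero, mul_one, zero_add] at this
  -- this : 1/2 * eFun 0 + 1/2 * eFun 1 ≤ eFun (1/2)
  have he0 : eFun 0 = 1/11 := by simp [eFun]
  have he1 : eFun 1 = (Real.sqrt 0.41 - 0.1) / 2 := by
    rw [eFun, if_neg one_ne_zero]
    norm_num
    ring
  have heh : eFun (1/2) = Real.sqrt 0.56 - 0.6 := by
    rw [eFun, if_neg (by norm_num : (1:ℝ)/2 ≠ 0)]
    rw [show ((1.1 - 1/2)^2 + 0.4*(1/2) : ℝ) = 0.56 by norm_num]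
    norm_num; ring
  have hb1 : Real.sqrt 0.41 > 0.6 := by
    rw [show (0.6:ℝ) = Real.sqrt (0.36) by rw [show (0.36:ℝ) = 0.6^2 by norm_num, Real.sqrt_sq]; norm_num]
    exact Real.sqrt_lt_sqrt (by norm_num) (by norm_num)
  have hb2 : Real.sqrt 0.56 < 0.75 := by
    rw [show (0.75:ℝ) = Real.sqrt (0.5625) by rw [show (0.5625:ℝ) = 0.75^2 by norm_num, Real.sqrt_sq]; norm_num]
    exact Real.sqrt_lt_sqrt (by norm_num) (by norm_num)
  rw [he0, he1, heh] at this
  linarith
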